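/- Let F be the global map of ECA rule 172 and take the symmetric Bernoulli initial measure μ_{1/2}. Then for every n ≥ 1: P_n(0) = 7/8 − F_{n+3}/2^{n+2}; P_n(00) = 3/4 − F_{n+3}/2^{n+2} − F_{n+2}/2^{n+4}; P_n(000) = 5/8 − F_{n+3}/2^{n+2} − F_{n+2}/2^{n+4}; and P_n(010) = 1/8 − F_{n+1}/2^{n+3}, where F_k denotes the k-th Fibonacci number (F_1 = F_2 = 1). -/

import Mathlib

open MeasureTheory

/-- The cylinder set generated by the binary word `b` (anchored at `0`). -/
def cylinder (b : List Bool) : Set (ℤ → Bool) :=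
  {x | ∀ j : Fin b.length, x (j.val : ℤ) = b.get j}

/-- The global map of the elementary cellular automaton with local rule `f`. -/
def eca (f : Bool → Bool → Bool → Bool) (x : ℤ → Bool) : ℤ → Bool :=
  fun i => f (x (i - 1)) (x i) (x (i + 1))

/-- The local rule of ECA rule 172: `f(x1,x2,x3) = x2` if `x1 = 0`, and `x3` if `x1 = 1`. -/
def rule172 (x1 x2 x3 : Bool) : Bool := if x1 then x3 else x2

/-- `μ` is the Bernoulli (i.i.d. product) measure with parameter `p`. -/
def IsBernoulli (p : ℝ) (μ : Measure (ℤ → Bool)) : Prop :=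
  ∀ (s : Finset ℤ) (f : ℤ → Bool),
    μ {x | ∀ i ∈ s, x i = f i} =
      ∏ i ∈ s, (if f i then ENNReal.ofReal p else ENNReal.ofReal (1 - p))

/-- `B` functions of rule 172 (value after `n` steps at a cell whose left neighbour is 1). -/
def BZ : ℕ → (ℤ → Bool) → ℤ → Bool
  | 0, x, i => x i
  | 1, x, i => x (i+1)
  | 2, x, i => if x i then x (i+2) else x (i+1)
  | (n+3), x, i => if x i then BZ (n+2) x (i+1) else (x (i+1) && BZ (n+1) x (i+2))

def CZ : ℕ → (ℤ → Bool) → ℤ → Bool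
  | 0, x, i => x i
  | 1, x, i => x i
  | (n+2), x, i => x i && BZ (n+1) x (i+1)

lemma BZ_succ (n : ℕ) (x : ℤ → Bool) (i : ℤ) :
    BZ (n+1) x i = if x i then BZ n x (i+1) else CZ n x (i+1) := by
  have e : i + 1 + 1 = i + 2 := by ring
  match n with
  | 0 => simp only [BZ, CZ]; cases x i <;> simp
  | 1 => simp only [BZ, CZ, e]
  | (n+2) => simp only [BZ, CZ, e]

lemma CZ_succ (n : ℕ) (x : ℤ → Bool) (i : ℤ) :
    CZ (n+2) x i = (x i && BZ (n+1) x (i+1)) := rfl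

lemma CZ_false {n : ℕ} {x : ℤ → Bool} {i : ℤ} (h : x i = false) : CZ n x i = false := by
  match n with
  | 0 => simpa [CZ] using h
  | 1 => simpa [CZ] using h
  | (n+2) => simp [CZ, h]

lemma eca_apply (x : ℤ → Bool) (i : ℤ) :
    eca rule172 x i = if x (i-1) then x (i+1) else x i := rfl

lemma H123 : ∀ n : ℕ,
    (∀ (x : ℤ → Bool) (i : ℤ), x (i-1) = true → BZ n (eca rule172 x) i = BZ (n+1) x i)
    ∧ (∀ (x : ℤ → Bool) (i : ℤ), x (i-1) = true → CZ n (eca rule172 x) i = CZ n x (i+1))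
    ∧ (∀ (x : ℤ → Bool) (i : ℤ), x i = true → BZ (n+1) (eca rule172 x) i = BZ (n+1) x (i+1)) := by
  intro n
  induction n using Nat.strong_induction_on with
  | _ n ih =>
  match n with
  | 0 =>
    refine ⟨?_, ?_, ?_⟩
    · intro x i h
      simp [BZ, eca_apply, h]
    · intro x i h
      simp [CZ, eca_apply, h]
    · intro x i h
      have e1 : i + 1 - 1 = i := by ring
      have e2 : i + 1 + 1 = i + 2 := by ring
      simp [BZ, eca_apply, e1, e2, h]
  | 1 =>
    constructor
    · intro x i h
      have e1 : i + 1 - 1 = i := by ring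
      have e2 : i + 1 + 1 = i + 2 := by ring
      simp only [BZ, eca_apply, e1, e2]
    constructor
    · intro x i h
      simp [CZ, eca_apply, h]
    · intro x i h
      have e1 : i + 1 - 1 = i := by ring
      have e2 : i + 1 + 1 = i + 2 := by ring
      have e3 : i + 2 - 1 = i + 1 := by ring
      have e4 : i + 2 + 1 = i + 3 := by ring
      have e5 : i + 1 + 2 = i + 3 := by ring
      simp only [BZ, eca_apply, e1, e2, e3, e4, e5, h]
      cases h1 : x (i-1) <;> cases h2 : x (i+1) <;> simp [h1, h2]
  | (n+2) =>
    have ihA := ih n (by omega)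
    have ihB := ih (n+1) (by omega)
    have e1 : ∀ j : ℤ, j + 1 - 1 = j := fun j => by ring
    have e2 : ∀ j : ℤ, j + 1 + 1 = j + 2 := fun j => by ring
    -- H3 at n+2
    have h3c : ∀ (x : ℤ → Bool) (i : ℤ), x (i-1) = true →
        CZ (n+2) (eca rule172 x) i = CZ (n+2) x (i+1) := by
      intro x i h
      rw [CZ_succ, CZ_succ]
      have hf : eca rule172 x i = x (i+1) := by simp [eca_apply, h]
      rw [hf]
      cases h1 : x (i+1)
      · simp
      · simp only [Bool.true_and]
        exact ihA.2.2 x (i+1) h1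
    -- H1 at n+2
    have h1c : ∀ (x : ℤ → Bool) (i : ℤ), x (i-1) = true →
        BZ (n+2) (eca rule172 x) i = BZ (n+3) x i := by
      intro x i h
      rw [show (n+2 : ℕ) = (n+1)+1 from rfl, BZ_succ (n+1), BZ_succ (n+2)]
      have hf : eca rule172 x i = x (i+1) := by simp [eca_apply, h]
      rw [hf]
      cases h1 : x (i+1)
      · simp only [Bool.false_eq_true, if_false]
        cases h0 : x i
        · have hfx1 : eca rule172 x (i+1) = false := by
            simp [eca_apply, e1 i, h0, h1]
          rw [CZ_false hfx1, if_neg (by simp [h0]), CZ_succ]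
          simp [h1]
        · rw [if_pos (by simp [h0])]
          have hh := ihB.2.1 x (i+1) (by rwa [e1 i])
          rw [hh, BZ_succ (n+1) x (i+1), if_neg (by simp [h1]), e2 i]
      · simp only [if_true]
        have hB : BZ (n+1) (eca rule172 x) (i+1) = BZ (n+1) x (i+2) := by
          have hh := ihA.2.2 x (i+1) h1
          rwa [e2 i] at hh
        rw [hB]
        cases h0 : x i
        · rw [if_neg (by simp [h0]), CZ_succ, h1]
          simp [e2 i]
        · rw [if_pos (by simp [h0]), BZ_succ (n+1) x (i+1), if_pos h1, e2 i]
    refine ⟨h1c, h3c, ?_⟩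
    -- H2 at n+2 : BZ (n+3) (F x) i = BZ (n+3) x (i+1),  x i = true
    intro x i h
    rw [show (n+3 : ℕ) = (n+2)+1 from rfl, BZ_succ (n+2), BZ_succ (n+2)]
    cases hm : x (i-1)
    · have hf : eca rule172 x i = true := by simp [eca_apply, hm, h]
      rw [hf, if_pos rfl]
      cases h1 : x (i+1)
      · rw [if_neg (by simp [h1])]
        have hh := h1c x (i+1) (by rwa [e1 i])
        rw [hh, show (n+3 : ℕ) = (n+2)+1 from rfl, BZ_succ (n+2) x (i+1),
          if_neg (by simp [h1]), e2 i]
      · rw [if_pos rfl]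
        have hh := ihB.2.2 x (i+1) h1
        rw [show (n+1+1 : ℕ) = n+2 from rfl] at hh
        rw [hh, e2 i]
    · have hf : eca rule172 x i = x (i+1) := by simp [eca_apply, hm]
      rw [hf]
      cases h1 : x (i+1)
      · simp only [Bool.false_eq_true, if_false]
        have hh := h3c x (i+1) (by rwa [e1 i])
        rw [hh, e2 i]
      · simp only [if_true]
        have hh := ihB.2.2 x (i+1) h1
        rw [show (n+1+1 : ℕ) = n+2 from rfl] at hh
        rw [hh, e2 i]

/-- The value of rule 172 after `n ≥ 1` steps, via the `B`/`C` functions. -/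
def OUTZ (n : ℕ) (x : ℤ → Bool) (i : ℤ) : Bool :=
  if x (i-1) then BZ n x i else if x (i-2) then CZ n x i else x i

theorem iter_eq (n : ℕ) (hn : 1 ≤ n) : ∀ (x : ℤ → Bool) (i : ℤ),
    (eca rule172)^[n] x i = OUTZ n x i := by
  induction n, hn using Nat.le_induction with
  | base =>
    intro x i
    have f2 : i - 1 + 1 = i := by ring
    simp only [Function.iterate_one, OUTZ, BZ, CZ, eca_apply]
    cases hA : x (i-1) <;> cases hB : x (i-2) <;> simp
  | succ n hn IH =>
    intro x i
    obtain ⟨m, rfl⟩ : ∃ m, n = m + 1 := ⟨n - 1, by omega⟩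
    rw [Function.iterate_succ_apply, IH]
    set y := eca rule172 x with hy
    have f1 : i - 1 - 1 = i - 2 := by ring
    have f2 : i - 1 + 1 = i := by ring
    have f3 : i - 2 - 1 = i - 3 := by ring
    have f4 : i - 2 + 1 = i - 1 := by ring
    have hy1 : y (i-1) = if x (i-2) then x i else x (i-1) := by
      rw [hy, eca_apply, f1, f2]
    have hy2 : y (i-2) = if x (i-3) then x (i-1) else x (i-2) := by
      rw [hy, eca_apply, f3, f4]
    have hyi : y i = if x (i-1) then x (i+1) else x i := by rw [hy, eca_apply]
    have h1 := ((H123 (m+1)).1) x i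
    have h3 := ((H123 (m+1)).2.1) x i
    have h2 := ((H123 m).2.2) x i
    rw [← hy] at h1 h3 h2
    have hbs : BZ (m+2) x i = if x i then BZ (m+1) x (i+1) else CZ (m+1) x (i+1) :=
      BZ_succ (m+1) x i
    unfold OUTZ
    cases hA : x (i-1)
    · cases hB : x (i-2)
      · cases hx3 : x (i-3) <;> simp [hy1, hy2, hyi, hA, hB, hx3]
      · cases hx : x i
        · have hyif : y i = false := by rw [hyi]; simp [hA, hx]
          cases hx3 : x (i-3) <;>
            simp [hy1, hy2, hA, hB, hx, hx3, hyif, CZ_false hyif, CZ_succ]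
        · have h2' := h2 hx
          simp [hy1, hy2, hA, hB, hx, h2', CZ_succ]
    · cases hB : x (i-2)
      · simp [hy1, hA, hB, h1 hA]
      · cases hx : x i
        · simp [hy1, hy2, hA, hB, hx, h3 hA, hbs]
        · simp [hy1, hA, hB, hx, h1 hA]

/-! ### List versions -/

def BLl : ℕ → List Bool → Bool
  | 0, l => l.headI
  | 1, l => l.tail.headI
  | 2, l => if l.headI then l.tail.tail.headI else l.tail.headI
  | (n+3), l => if l.headI then BLl (n+2) l.tail else (l.tail.headI && BLl (n+1) l.tail.tail)

def CLl : ℕ → List Bool → Bool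
  | 0, l => l.headI
  | 1, l => l.headI
  | (n+2), l => l.headI && BLl (n+1) l.tail

lemma BLl_cons (n : ℕ) (a : Bool) (l : List Bool) :
    BLl (n+1) (a :: l) = if a then BLl n l else CLl n l := by
  match n with
  | 0 => show l.headI = _ ; cases a <;> simp [BLl, CLl]
  | 1 => show (if a then l.tail.headI else l.headI) = _ ; cases a <;> simp [BLl, CLl]
  | (n+2) => show (if a then BLl (n+2) l else (l.headI && BLl (n+1) l.tail)) = _
             cases a <;> simp [BLl, CLl]

lemma CLl_cons (n : ℕ) (a : Bool) (l : List Bool) :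
    CLl (n+2) (a :: l) = (a && BLl (n+1) l) := rfl

lemma headI_eq_getD (l : List Bool) : l.headI = l.getD 0 false := by cases l <;> rfl

lemma tail_getD (l : List Bool) (p : ℕ) : l.tail.getD p false = l.getD (p+1) false := by
  cases l <;> simp

lemma BLl_match : ∀ (n : ℕ) (l : List Bool) (x : ℤ → Bool) (i : ℤ),
    n + 1 ≤ l.length → (∀ p : ℕ, p < l.length → l.getD p false = x (i + p)) →
    BLl n l = BZ n x i := by
  intro n
  induction n using Nat.strong_induction_on with
  | _ n ih =>
  intro l x i hlen hm
  have h0 : 0 < l.length → l.headI = x i := fun h => by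
    have := hm 0 h; rwa [← headI_eq_getD, Nat.cast_zero, add_zero] at this
  have h1 : 1 < l.length → l.tail.headI = x (i+1) := fun h => by
    have := hm 1 h; rwa [← tail_getD, ← headI_eq_getD, Nat.cast_one] at this
  have h2 : 2 < l.length → l.tail.tail.headI = x (i+2) := fun h => by
    have := hm 2 h
    rw [show ((2:ℕ):ℤ) = 2 by norm_num] at this
    rwa [show l.getD 2 false = l.tail.tail.headI by
      rw [← tail_getD, ← tail_getD, ← headI_eq_getD]] at this
  have hmt : ∀ p : ℕ, p < l.tail.length → l.tail.getD p false = x ((i+1) + p) := by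
    intro p hp
    rw [tail_getD]
    have := hm (p+1) (by simp at hp ⊢; omega)
    rw [this]
    congr 1
    push_cast; ring
  have hmtt : ∀ p : ℕ, p < l.tail.tail.length → l.tail.tail.getD p false = x ((i+2) + p) := by
    intro p hp
    rw [tail_getD, tail_getD]
    have := hm (p+2) (by simp at hp ⊢; omega)
    rw [this]
    congr 1
    push_cast; ring
  match n with
  | 0 => show l.headI = x i ; exact h0 (by omega)
  | 1 => show l.tail.headI = x (i+1) ; exact h1 (by omega)
  | 2 =>
    show (if l.headI then l.tail.tail.headI else l.tail.headI) = BZ 2 x i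
    rw [h0 (by omega), h1 (by omega), h2 (by omega)]; rfl
  | (n+3) =>
    show (if l.headI then BLl (n+2) l.tail else (l.tail.headI && BLl (n+1) l.tail.tail))
        = BZ (n+3) x i
    rw [h0 (by omega), h1 (by omega),
      ih (n+2) (by omega) l.tail x (i+1) (by simp; omega) hmt,
      ih (n+1) (by omega) l.tail.tail x (i+2) (by simp; omega) hmtt]
    rfl

lemma CLl_match (n : ℕ) (l : List Bool) (x : ℤ → Bool) (i : ℤ)
    (hlen : n + 1 ≤ l.length) (hm : ∀ p : ℕ, p < l.length → l.getD p false = x (i + p)) :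
    CLl n l = CZ n x i := by
  have h0 : l.headI = x i := by
    have := hm 0 (by omega); rwa [← headI_eq_getD, Nat.cast_zero, add_zero] at this
  have hmt : ∀ p : ℕ, p < l.tail.length → l.tail.getD p false = x ((i+1) + p) := by
    intro p hp
    rw [tail_getD]
    have := hm (p+1) (by simp at hp ⊢; omega)
    rw [this]; congr 1; push_cast; ring
  match n with
  | 0 => exact h0
  | 1 => exact h0
  | (n+2) =>
    show (l.headI && BLl (n+1) l.tail) = CZ (n+2) x i
    rw [h0, BLl_match (n+1) l.tail x (i+1) (by simp; omega) hmt]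
    rfl

def OUTL (n : ℕ) (l : List Bool) : Bool :=
  if l.tail.headI then BLl n l.tail.tail
  else if l.headI then CLl n l.tail.tail
  else l.tail.tail.headI

def goodL (n : ℕ) : List Bool → List Bool → Bool
  | [], _ => true
  | c :: b', l => (OUTL n l == c) && goodL n b' l.tail

lemma OUTL_match (n : ℕ) (l : List Bool) (x : ℤ → Bool) (i : ℤ)
    (hlen : n + 3 ≤ l.length) (hm : ∀ p : ℕ, p < l.length → l.getD p false = x (i + p)) :
    OUTL n l = OUTZ n x (i + 2) := by
  have h0 : l.headI = x i := by
    have := hm 0 (by omega); rwa [← headI_eq_getD, Nat.cast_zero, add_zero] at this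
  have h1 : l.tail.headI = x (i+1) := by
    have := hm 1 (by omega); rwa [← tail_getD, ← headI_eq_getD, Nat.cast_one] at this
  have h2 : l.tail.tail.headI = x (i+2) := by
    have := hm 2 (by omega)
    rw [show ((2:ℕ):ℤ) = 2 by norm_num] at this
    rwa [← tail_getD, ← tail_getD, ← headI_eq_getD] at this
  have hmtt : ∀ p : ℕ, p < l.tail.tail.length → l.tail.tail.getD p false = x ((i+2) + p) := by
    intro p hp
    rw [tail_getD, tail_getD]
    have := hm (p+2) (by simp at hp ⊢; omega)
    rw [this]; congr 1; push_cast; ring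
  have hB : BLl n l.tail.tail = BZ n x (i+2) :=
    BLl_match n l.tail.tail x (i+2) (by simp; omega) hmtt
  have hC : CLl n l.tail.tail = CZ n x (i+2) :=
    CLl_match n l.tail.tail x (i+2) (by simp; omega) hmtt
  have e1 : i + 2 - 1 = i + 1 := by ring
  have e2 : i + 2 - 2 = i := by ring
  rw [OUTL, OUTZ, e1, e2, h0, h1, h2, hB, hC]

lemma goodL_iff (n : ℕ) (hn : 1 ≤ n) : ∀ (b l : List Bool) (x : ℤ → Bool) (i : ℤ),
    n + b.length + 2 ≤ l.length →
    (∀ p : ℕ, p < l.length → l.getD p false = x (i + p)) →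
    (goodL n b l = true ↔ ∀ j : Fin b.length, (eca rule172)^[n] x (i + 2 + j) = b.get j) := by
  intro b
  induction b with
  | nil => intro l x i _ _; simp [goodL]
  | cons c b' IH =>
    intro l x i hlen hm
    have hmt : ∀ p : ℕ, p < l.tail.length → l.tail.getD p false = x ((i+1) + p) := by
      intro p hp
      rw [tail_getD]
      have := hm (p+1) (by simp at hp ⊢; omega)
      rw [this]; congr 1; push_cast; ring
    have hout : OUTL n l = (eca rule172)^[n] x (i + 2) := by
      rw [OUTL_match n l x i (by simp at hlen ⊢; omega) hm, iter_eq n hn]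
    have hrec := IH l.tail x (i+1) (by simp at hlen ⊢; omega) hmt
    show ((OUTL n l == c) && goodL n b' l.tail) = true ↔ _
    rw [Bool.and_eq_true, beq_iff_eq, hout, hrec]
    constructor
    · rintro ⟨hc, hrest⟩ j
      rcases j with ⟨jv, hj⟩
      match jv, hj with
      | 0, _ => simpa using hc
      | (jj+1), hj =>
        have h' := hrest ⟨jj, by simpa using Nat.lt_of_succ_lt_succ hj⟩
        simp only [Fin.val_mk] at h' ⊢
        push_cast
        rw [show i + 2 + ((jj : ℤ) + 1) = i + 1 + 2 + (jj : ℤ) by ring]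
        simpa [List.get] using h'
    · intro hall
      constructor
      · simpa using hall ⟨0, by simp⟩
      · intro j
        rcases j with ⟨jv, hj⟩
        have h' := hall ⟨jv + 1, by simpa using Nat.succ_lt_succ hj⟩
        simp only [Fin.val_mk] at h' ⊢
        push_cast at h'
        rw [show i + 2 + ((jv : ℤ) + 1) = i + 1 + 2 + (jv : ℤ) by ring] at h'
        simpa [List.get] using h'

/-! ### Counting -/

def cnt : ℕ → (List Bool → Bool) → ℕ
  | 0, P => if P [] then 1 else 0
  | (m+1), P => cnt m (fun l => P (true :: l)) + cnt m (fun l => P (false :: l))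

lemma cnt_congr : ∀ (m : ℕ) (P Q : List Bool → Bool),
    (∀ l : List Bool, l.length = m → P l = Q l) → cnt m P = cnt m Q := by
  intro m
  induction m with
  | zero => intro P Q h; simp [cnt, h [] rfl]
  | succ m IH =>
    intro P Q h
    show cnt m _ + cnt m _ = cnt m _ + cnt m _
    rw [IH _ _ (fun l hl => h (true :: l) (by simp [hl])),
        IH _ _ (fun l hl => h (false :: l) (by simp [hl]))]

lemma cnt_true_const : ∀ m : ℕ, cnt m (fun _ => true) = 2^m := by
  intro m
  induction m with
  | zero => rfl
  | succ m IH => show cnt m _ + cnt m _ = 2^(m+1); rw [IH]; ring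

lemma cnt_false_const : ∀ m : ℕ, cnt m (fun _ => false) = 0 := by
  intro m
  induction m with
  | zero => rfl
  | succ m IH => show cnt m _ + cnt m _ = 0; rw [IH]

lemma ofFn_cons (m : ℕ) (a : Bool) (u : Fin m → Bool) :
    List.ofFn (Fin.cons a u : Fin (m+1) → Bool) = a :: List.ofFn u := by
  rw [List.ofFn_succ]
  congr 1

lemma card_eq_cnt : ∀ (m : ℕ) (P : List Bool → Bool),
    (Finset.univ.filter (fun v : Fin m → Bool => P (List.ofFn v) = true)).card = cnt m P := by
  intro m
  induction m with
  | zero =>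
    intro P
    show _ = if P [] then 1 else 0
    by_cases h : P [] = true
    · rw [if_pos h]
      rw [Finset.filter_true_of_mem (fun v _ => by
        rwa [show List.ofFn v = [] from List.ofFn_zero] )]
      simp
    · rw [if_neg h]
      rw [Finset.filter_false_of_mem (fun v _ => by
        rwa [show List.ofFn v = [] from List.ofFn_zero] )]
      simp
  | succ m IH =>
    intro P
    rw [Finset.card_filter]
    rw [← Equiv.sum_comp (Fin.consEquiv (fun _ : Fin (m+1) => Bool))
        (fun v => if P (List.ofFn v) = true then (1:ℕ) else 0)]
    rw [Fintype.sum_prod_type, Fintype.sum_bool]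
    show (∑ u : Fin m → Bool, if P (List.ofFn (Fin.cons true u)) = true then (1:ℕ) else 0)
       + (∑ u : Fin m → Bool, if P (List.ofFn (Fin.cons false u)) = true then (1:ℕ) else 0)
       = cnt (m+1) P
    have A := IH (fun l => P (true :: l))
    have B := IH (fun l => P (false :: l))
    rw [Finset.card_filter] at A B
    show _ = cnt m (fun l => P (true :: l)) + cnt m (fun l => P (false :: l))
    rw [← A, ← B]
    simp only [ofFn_cons]

/-! ### Measure computation -/


def extv (m : ℕ) (v : Fin m → Bool) : ℤ → Bool := fun j =>
  if h : 0 ≤ j + 2 ∧ j + 2 < (m : ℤ) then v ⟨(j+2).toNat, by omega⟩ else false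

def restr (m : ℕ) (x : ℤ → Bool) : Fin m → Bool := fun p => x ((p : ℤ) - 2)

def Cyl (m : ℕ) (v : Fin m → Bool) : Set (ℤ → Bool) :=
  {x | ∀ i ∈ Finset.Icc (-2 : ℤ) ((m:ℤ) - 3), x i = extv m v i}

lemma mem_Cyl_restr (m : ℕ) (x : ℤ → Bool) : x ∈ Cyl m (restr m x) := by
  intro i hi
  rw [Finset.mem_Icc] at hi
  rw [extv, dif_pos (by omega)]
  show x i = x (((i+2).toNat : ℤ) - 2)
  congr 1
  have : ((i+2).toNat : ℤ) = i + 2 := Int.toNat_of_nonneg (by omega)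
  omega

lemma Cyl_eq_restr {m : ℕ} {x : ℤ → Bool} {v : Fin m → Bool} (h : x ∈ Cyl m v) :
    v = restr m x := by
  funext p
  have hp := h ((p : ℤ) - 2) (by rw [Finset.mem_Icc]; constructor <;> [omega; (have := p.isLt; omega)])
  show v p = x ((p : ℤ) - 2)
  rw [hp, extv, dif_pos (by constructor <;> [omega; (have := p.isLt; omega)])]
  congr 1
  apply Fin.ext
  show (p : ℕ) = ((p : ℤ) - 2 + 2).toNat
  have h2 : (p : ℤ) - 2 + 2 = ((p : ℕ) : ℤ) := by ring
  rw [h2, Int.toNat_natCast]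

lemma ofFn_restr_getD (m : ℕ) (x : ℤ → Bool) (p : ℕ) (hp : p < m) :
    (List.ofFn (restr m x)).getD p false = x ((-2 : ℤ) + p) := by
  rw [List.getD_eq_getElem _ _ (by simpa using hp), List.getElem_ofFn]
  show x (((p:ℕ) : ℤ) - 2) = x ((-2:ℤ) + p)
  congr 1 <;> ring

lemma preimage_mem_iff (n : ℕ) (hn : 1 ≤ n) (b : List Bool) (x : ℤ → Bool) :
    x ∈ (eca rule172)^[n] ⁻¹' cylinder b
      ↔ goodL n b (List.ofFn (restr (n + b.length + 2) x)) = true := by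
  set m := n + b.length + 2 with hm
  have hlen : n + b.length + 2 ≤ (List.ofFn (restr m x)).length := by simp [hm]
  have hmatch : ∀ p : ℕ, p < (List.ofFn (restr m x)).length →
      (List.ofFn (restr m x)).getD p false = x ((-2 : ℤ) + p) := by
    intro p hp
    exact ofFn_restr_getD m x p (by rw [List.length_ofFn] at hp; exact hp)
  rw [goodL_iff n hn b _ x (-2) hlen hmatch]
  constructor
  · intro h j
    rw [show (-2 : ℤ) + 2 + ((j : ℕ) : ℤ) = ((j : ℕ) : ℤ) by ring]
    exact h j
  · intro h j
    have h' := h j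
    rwa [show (-2 : ℤ) + 2 + ((j : ℕ) : ℤ) = ((j : ℕ) : ℤ) by ring] at h'

lemma measure_Cyl (μ : Measure (ℤ → Bool)) (hber : IsBernoulli (1/2) μ)
    (m : ℕ) (v : Fin m → Bool) :
    μ (Cyl m v) = (ENNReal.ofReal (1/2))^m := by
  have := hber (Finset.Icc (-2 : ℤ) ((m:ℤ) - 3)) (extv m v)
  rw [show {x : ℤ → Bool | ∀ i ∈ Finset.Icc (-2 : ℤ) ((m:ℤ) - 3), x i = extv m v i}
      = Cyl m v from rfl] at this
  rw [this]
  rw [Finset.prod_congr rfl (fun i _ => by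
    show _ = ENNReal.ofReal (1/2)
    norm_num)]
  rw [Finset.prod_const, Int.card_Icc]
  have hc : (((m:ℤ) - 3 + 1 - (-2)).toNat) = m := by omega
  rw [hc]

lemma Cyl_measurable (m : ℕ) (v : Fin m → Bool) : MeasurableSet (Cyl m v) := by
  have : Cyl m v = ⋂ i ∈ (Finset.Icc (-2 : ℤ) ((m:ℤ) - 3) : Finset ℤ),
      (fun x : ℤ → Bool => x i) ⁻¹' {extv m v i} := by
    ext x
    simp [Cyl, Set.mem_iInter]
  rw [this]
  exact MeasurableSet.biInter (Set.to_countable _)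
    (fun i _ => (measurable_pi_apply i) (MeasurableSet.singleton _))

lemma measure_preimage_eq (μ : Measure (ℤ → Bool)) (hber : IsBernoulli (1/2) μ)
    (n : ℕ) (hn : 1 ≤ n) (b : List Bool) :
    (μ ((eca rule172)^[n] ⁻¹' cylinder b)).toReal
      = (cnt (n + b.length + 2) (goodL n b) : ℝ) * (1/2 : ℝ)^(n + b.length + 2) := by
  set m := n + b.length + 2 with hm
  set G : Finset (Fin m → Bool) :=
    Finset.univ.filter (fun v : Fin m → Bool => goodL n b (List.ofFn v) = true) with hG
  have hset : (eca rule172)^[n] ⁻¹' cylinder b = ⋃ v ∈ G, Cyl m v := by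
    ext x
    rw [preimage_mem_iff n hn b x, ← hm]
    constructor
    · intro h
      have hvG : restr m x ∈ G := by
        rw [hG, Finset.mem_filter]; exact ⟨Finset.mem_univ _, h⟩
      exact Set.mem_biUnion hvG (mem_Cyl_restr m x)
    · intro h
      rcases Set.mem_iUnion₂.1 h with ⟨v, hv, hxv⟩
      rw [hG, Finset.mem_filter] at hv
      rw [← Cyl_eq_restr hxv]
      exact hv.2
  rw [hset, measure_biUnion_finset ?disj (fun v _ => Cyl_measurable m v)]
  case disj =>
    intro v _ w _ hvw
    refine Set.disjoint_left.2 (fun x hxv hxw => hvw ?_)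
    rw [Cyl_eq_restr hxv, Cyl_eq_restr hxw]
  rw [Finset.sum_congr rfl (fun v _ => measure_Cyl μ hber m v), Finset.sum_const,
    hG, card_eq_cnt]
  rw [nsmul_eq_mul]
  rw [ENNReal.toReal_mul, ENNReal.toReal_pow, ENNReal.toReal_ofReal (by norm_num)]
  simp

/-! ### Count families -/

def fB0 (m : ℕ) : ℕ := cnt (m+1) (fun l => !BLl m l)
def fC0 (m : ℕ) : ℕ := cnt (m+1) (fun l => !CLl m l)
def fPBB (m : ℕ) : ℕ := cnt (m+2) (fun l => !BLl m l && !BLl (m+1) l)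
def fPCC (m : ℕ) : ℕ := cnt (m+2) (fun l => !CLl m l && !CLl (m+1) l)
def fVB (m : ℕ) : ℕ := cnt (m+3) (fun l => !BLl m l && !BLl (m+1) l && !BLl (m+2) l)
def fVC (m : ℕ) : ℕ := cnt (m+3) (fun l => !CLl m l && !CLl (m+1) l && !CLl (m+2) l)
def fWB (m : ℕ) : ℕ := cnt (m+3) (fun l => !BLl m l && BLl (m+1) l && !BLl (m+2) l)
def fWC (m : ℕ) : ℕ := cnt (m+3) (fun l => !CLl m l && CLl (m+1) l && !CLl (m+2) l)
def fSB2 (m : ℕ) : ℕ := cnt (m+3) (fun l => !BLl (m+2) l)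
def fSC2 (m : ℕ) : ℕ := cnt (m+3) (fun l => !CLl (m+2) l)

lemma fB0_rec (m : ℕ) : fB0 (m+2) = fB0 (m+1) + fC0 (m+1) := by
  have h1 : cnt (m+2) (fun l => (fun l => !BLl (m+2) l) (true :: l)) = fB0 (m+1) :=
    (cnt_congr _ _ (fun l => !BLl (m+1) l) (fun l _ => by simp [BLl_cons])).trans rfl
  have h2 : cnt (m+2) (fun l => (fun l => !BLl (m+2) l) (false :: l)) = fC0 (m+1) :=
    (cnt_congr _ _ (fun l => !CLl (m+1) l) (fun l _ => by simp [BLl_cons])).trans rfl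
  show cnt (m+2) (fun l => (fun l => !BLl (m+2) l) (true :: l)) + cnt (m+2) (fun l => (fun l => !BLl (m+2) l) (false :: l)) = _
  rw [h1, h2]

lemma fC0_rec (m : ℕ) : fC0 (m+2) = fB0 (m+1) + 2^(m+2) := by
  have h1 : cnt (m+2) (fun l => (fun l => !CLl (m+2) l) (true :: l)) = fB0 (m+1) :=
    (cnt_congr _ _ (fun l => !BLl (m+1) l) (fun l _ => by simp [CLl_cons])).trans rfl
  have h2 : cnt (m+2) (fun l => (fun l => !CLl (m+2) l) (false :: l)) = 2^(m+2) :=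
    (cnt_congr _ _ (fun _ => true) (fun l _ => by simp [CLl_cons])).trans (cnt_true_const (m+2))
  show cnt (m+2) (fun l => (fun l => !CLl (m+2) l) (true :: l)) + cnt (m+2) (fun l => (fun l => !CLl (m+2) l) (false :: l)) = _
  rw [h1, h2]

lemma fPBB_rec (m : ℕ) : fPBB (m+2) = fPBB (m+1) + fPCC (m+1) := by
  have h1 : cnt (m+3) (fun l => (fun l => !BLl (m+2) l && !BLl (m+3) l) (true :: l)) = fPBB (m+1) :=
    (cnt_congr _ _ (fun l => !BLl (m+1) l && !BLl (m+2) l) (fun l _ => by simp [BLl_cons])).trans rfl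
  have h2 : cnt (m+3) (fun l => (fun l => !BLl (m+2) l && !BLl (m+3) l) (false :: l)) = fPCC (m+1) :=
    (cnt_congr _ _ (fun l => !CLl (m+1) l && !CLl (m+2) l) (fun l _ => by simp [BLl_cons])).trans rfl
  show cnt (m+3) (fun l => (fun l => !BLl (m+2) l && !BLl (m+3) l) (true :: l)) + cnt (m+3) (fun l => (fun l => !BLl (m+2) l && !BLl (m+3) l) (false :: l)) = _
  rw [h1, h2]

lemma fPCC_rec (m : ℕ) : fPCC (m+2) = fPBB (m+1) + 2^(m+3) := by
  have h1 : cnt (m+3) (fun l => (fun l => !CLl (m+2) l && !CLl (m+3) l) (true :: l)) = fPBB (m+1) :=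
    (cnt_congr _ _ (fun l => !BLl (m+1) l && !BLl (m+2) l) (fun l _ => by simp [CLl_cons])).trans rfl
  have h2 : cnt (m+3) (fun l => (fun l => !CLl (m+2) l && !CLl (m+3) l) (false :: l)) = 2^(m+3) :=
    (cnt_congr _ _ (fun _ => true) (fun l _ => by simp [CLl_cons])).trans (cnt_true_const (m+3))
  show cnt (m+3) (fun l => (fun l => !CLl (m+2) l && !CLl (m+3) l) (true :: l)) + cnt (m+3) (fun l => (fun l => !CLl (m+2) l && !CLl (m+3) l) (false :: l)) = _
  rw [h1, h2]

lemma fVB_rec (m : ℕ) : fVB (m+2) = fVB (m+1) + fVC (m+1) := by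
  have h1 : cnt (m+4) (fun l => (fun l => !BLl (m+2) l && !BLl (m+3) l && !BLl (m+4) l) (true :: l)) = fVB (m+1) :=
    (cnt_congr _ _ (fun l => !BLl (m+1) l && !BLl (m+2) l && !BLl (m+3) l) (fun l _ => by simp [BLl_cons])).trans rfl
  have h2 : cnt (m+4) (fun l => (fun l => !BLl (m+2) l && !BLl (m+3) l && !BLl (m+4) l) (false :: l)) = fVC (m+1) :=
    (cnt_congr _ _ (fun l => !CLl (m+1) l && !CLl (m+2) l && !CLl (m+3) l) (fun l _ => by simp [BLl_cons])).trans rfl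
  show cnt (m+4) (fun l => (fun l => !BLl (m+2) l && !BLl (m+3) l && !BLl (m+4) l) (true :: l)) + cnt (m+4) (fun l => (fun l => !BLl (m+2) l && !BLl (m+3) l && !BLl (m+4) l) (false :: l)) = _
  rw [h1, h2]

lemma fVC_rec (m : ℕ) : fVC (m+2) = fVB (m+1) + 2^(m+4) := by
  have h1 : cnt (m+4) (fun l => (fun l => !CLl (m+2) l && !CLl (m+3) l && !CLl (m+4) l) (true :: l)) = fVB (m+1) :=
    (cnt_congr _ _ (fun l => !BLl (m+1) l && !BLl (m+2) l && !BLl (m+3) l) (fun l _ => by simp [CLl_cons])).trans rfl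
  have h2 : cnt (m+4) (fun l => (fun l => !CLl (m+2) l && !CLl (m+3) l && !CLl (m+4) l) (false :: l)) = 2^(m+4) :=
    (cnt_congr _ _ (fun _ => true) (fun l _ => by simp [CLl_cons])).trans (cnt_true_const (m+4))
  show cnt (m+4) (fun l => (fun l => !CLl (m+2) l && !CLl (m+3) l && !CLl (m+4) l) (true :: l)) + cnt (m+4) (fun l => (fun l => !CLl (m+2) l && !CLl (m+3) l && !CLl (m+4) l) (false :: l)) = _
  rw [h1, h2]

lemma fWB_rec (m : ℕ) : fWB (m+2) = fWB (m+1) + fWC (m+1) := by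
  have h1 : cnt (m+4) (fun l => (fun l => !BLl (m+2) l && BLl (m+3) l && !BLl (m+4) l) (true :: l)) = fWB (m+1) :=
    (cnt_congr _ _ (fun l => !BLl (m+1) l && BLl (m+2) l && !BLl (m+3) l) (fun l _ => by simp [BLl_cons])).trans rfl
  have h2 : cnt (m+4) (fun l => (fun l => !BLl (m+2) l && BLl (m+3) l && !BLl (m+4) l) (false :: l)) = fWC (m+1) :=
    (cnt_congr _ _ (fun l => !CLl (m+1) l && CLl (m+2) l && !CLl (m+3) l) (fun l _ => by simp [BLl_cons])).trans rfl
  show cnt (m+4) (fun l => (fun l => !BLl (m+2) l && BLl (m+3) l && !BLl (m+4) l) (true :: l)) + cnt (m+4) (fun l => (fun l => !BLl (m+2) l && BLl (m+3) l && !BLl (m+4) l) (false :: l)) = _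
  rw [h1, h2]

lemma fWC_rec (m : ℕ) : fWC (m+2) = fWB (m+1) + 0 := by
  have h1 : cnt (m+4) (fun l => (fun l => !CLl (m+2) l && CLl (m+3) l && !CLl (m+4) l) (true :: l)) = fWB (m+1) :=
    (cnt_congr _ _ (fun l => !BLl (m+1) l && BLl (m+2) l && !BLl (m+3) l) (fun l _ => by simp [CLl_cons])).trans rfl
  have h2 : cnt (m+4) (fun l => (fun l => !CLl (m+2) l && CLl (m+3) l && !CLl (m+4) l) (false :: l)) = 0 :=
    (cnt_congr _ _ (fun _ => false) (fun l _ => by simp [CLl_cons])).trans (cnt_false_const (m+4))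
  show cnt (m+4) (fun l => (fun l => !CLl (m+2) l && CLl (m+3) l && !CLl (m+4) l) (true :: l)) + cnt (m+4) (fun l => (fun l => !CLl (m+2) l && CLl (m+3) l && !CLl (m+4) l) (false :: l)) = _
  rw [h1, h2]

lemma fSB2_rec (m : ℕ) : fSB2 (m+2) = fSB2 (m+1) + fSC2 (m+1) := by
  have h1 : cnt (m+4) (fun l => (fun l => !BLl (m+4) l) (true :: l)) = fSB2 (m+1) :=
    (cnt_congr _ _ (fun l => !BLl (m+3) l) (fun l _ => by simp [BLl_cons])).trans rfl
  have h2 : cnt (m+4) (fun l => (fun l => !BLl (m+4) l) (false :: l)) = fSC2 (m+1) :=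
    (cnt_congr _ _ (fun l => !CLl (m+3) l) (fun l _ => by simp [BLl_cons])).trans rfl
  show cnt (m+4) (fun l => (fun l => !BLl (m+4) l) (true :: l)) + cnt (m+4) (fun l => (fun l => !BLl (m+4) l) (false :: l)) = _
  rw [h1, h2]

lemma fSC2_rec (m : ℕ) : fSC2 (m+2) = fSB2 (m+1) + 2^(m+4) := by
  have h1 : cnt (m+4) (fun l => (fun l => !CLl (m+4) l) (true :: l)) = fSB2 (m+1) :=
    (cnt_congr _ _ (fun l => !BLl (m+3) l) (fun l _ => by simp [CLl_cons])).trans rfl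
  have h2 : cnt (m+4) (fun l => (fun l => !CLl (m+4) l) (false :: l)) = 2^(m+4) :=
    (cnt_congr _ _ (fun _ => true) (fun l _ => by simp [CLl_cons])).trans (cnt_true_const (m+4))
  show cnt (m+4) (fun l => (fun l => !CLl (m+4) l) (true :: l)) + cnt (m+4) (fun l => (fun l => !CLl (m+4) l) (false :: l)) = _
  rw [h1, h2]


lemma cnt_nothead (m : ℕ) : cnt (m+1) (fun l => !l.headI) = 2^m := by
  have h1 : cnt m (fun l => ((fun l => !l.headI) (true :: l) : Bool)) = 0 :=
    (cnt_congr _ _ (fun _ => false) (fun l _ => by simp)).trans (cnt_false_const m)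
  have h2 : cnt m (fun l => ((fun l => !l.headI) (false :: l) : Bool)) = 2^m :=
    (cnt_congr _ _ (fun _ => true) (fun l _ => by simp)).trans (cnt_true_const m)
  show cnt m _ + cnt m _ = 2^m
  rw [h1, h2, Nat.zero_add]

lemma closed_forms : ∀ m : ℕ,
    fB0 (m+1) + 2 * Nat.fib (m+2) = 2^(m+2)
    ∧ fC0 (m+1) + 2 * Nat.fib (m+1) = 2^(m+2)
    ∧ fPBB (m+1) + 4 * Nat.fib (m+2) + Nat.fib (m+1) = 2^(m+3)
    ∧ fPCC (m+1) + Nat.fib (m+2) + 3 * Nat.fib (m+1) = 2^(m+3)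
    ∧ fVB (m+1) + 8 * Nat.fib (m+2) + 2 * Nat.fib (m+1) = 2^(m+4)
    ∧ fVC (m+1) + 2 * Nat.fib (m+2) + 6 * Nat.fib (m+1) = 2^(m+4)
    ∧ fWB (m+1) = 0
    ∧ fWC (m+1) = 0
    ∧ fSB2 (m+1) + 4 * Nat.fib (m+2) + 2 * Nat.fib (m+1) = 2^(m+4)
    ∧ fSC2 (m+1) + 2 * Nat.fib (m+2) + 2 * Nat.fib (m+1) = 2^(m+4) := by
  intro m
  induction m with
  | zero =>
    refine ⟨?_, ?_, ?_, ?_, ?_, ?_, ?_, ?_, ?_, ?_⟩ <;> decide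
  | succ m IH =>
    obtain ⟨hB, hC, hPB, hPC, hVB, hVC, hWB, hWC, hSB, hSC⟩ := IH
    have hfib : Nat.fib (m+3) = Nat.fib (m+1) + Nat.fib (m+2) := Nat.fib_add_two
    have hp2 : (2:ℕ)^(m+3) = 2^(m+2) + 2^(m+2) := by ring
    have hp3 : (2:ℕ)^(m+4) = 2^(m+3) + 2^(m+3) := by ring
    have hp4 : (2:ℕ)^(m+5) = 2^(m+4) + 2^(m+4) := by ring
    simp only [show m+1+1 = m+2 from rfl, show m+1+2 = m+3 from rfl,
      show m+1+3 = m+4 from rfl, show m+1+4 = m+5 from rfl]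
    refine ⟨?_, ?_, ?_, ?_, ?_, ?_, ?_, ?_, ?_, ?_⟩
    · rw [fB0_rec]; omega
    · rw [fC0_rec]; omega
    · rw [fPBB_rec]; omega
    · rw [fPCC_rec]; omega
    · rw [fVB_rec]; omega
    · rw [fVC_rec]; omega
    · rw [fWB_rec]; omega
    · rw [fWC_rec]; omega
    · rw [fSB2_rec]; omega
    · rw [fSC2_rec]; omega

lemma decomp1 (n : ℕ) : cnt (n+3) (goodL n [false]) = (fB0 n + fC0 n) + (fB0 n + 2^n) := by
  have htt : cnt (n+1) (fun l => goodL n [false] (true::true::l)) = fB0 n :=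
    (cnt_congr _ _ (fun l => !BLl n l) (fun l _ => by simp [goodL, OUTL, BLl_cons, CLl_cons])).trans rfl
  have htf : cnt (n+1) (fun l => goodL n [false] (true::false::l)) = fC0 n :=
    (cnt_congr _ _ (fun l => !CLl n l) (fun l _ => by simp [goodL, OUTL, BLl_cons, CLl_cons])).trans rfl
  have hft : cnt (n+1) (fun l => goodL n [false] (false::true::l)) = fB0 n :=
    (cnt_congr _ _ (fun l => !BLl n l) (fun l _ => by simp [goodL, OUTL, BLl_cons, CLl_cons])).trans rfl
  have hff : cnt (n+1) (fun l => goodL n [false] (false::false::l)) = 2^n :=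
    (cnt_congr _ _ (fun l => !l.headI) (fun l _ => by simp [goodL, OUTL, BLl_cons, CLl_cons])).trans (cnt_nothead n)
  show (cnt (n+1) (fun l => goodL n [false] (true::true::l)) + cnt (n+1) (fun l => goodL n [false] (true::false::l)))
      + (cnt (n+1) (fun l => goodL n [false] (false::true::l)) + cnt (n+1) (fun l => goodL n [false] (false::false::l))) = _
  rw [htt, htf, hft, hff]

lemma decomp2 (m : ℕ) : cnt (m+6) (goodL (m+2) [false,false])
    = ((fPBB (m+1) + fPCC (m+1)) + (fPBB (m+1) + 2^(m+2)))
      + ((fPBB (m+1) + fPCC (m+1)) + (0 + 2^(m+2))) := by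
  have httt : cnt (m+3) (fun l => goodL (m+2) [false,false] (true::true::true::l)) = fPBB (m+1) :=
    (cnt_congr _ _ (fun l => !BLl (m+1) l && !BLl (m+2) l) (fun l _ => by simp [goodL, OUTL, BLl_cons, CLl_cons, Bool.and_assoc, show m+1+1 = m+2 from rfl, show m+2+1 = m+3 from rfl])).trans rfl
  have httf : cnt (m+3) (fun l => goodL (m+2) [false,false] (true::true::false::l)) = fPCC (m+1) :=
    (cnt_congr _ _ (fun l => !CLl (m+1) l && !CLl (m+2) l) (fun l _ => by simp [goodL, OUTL, BLl_cons, CLl_cons, Bool.and_assoc, show m+1+1 = m+2 from rfl, show m+2+1 = m+3 from rfl])).trans rfl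
  have htft : cnt (m+3) (fun l => goodL (m+2) [false,false] (true::false::true::l)) = fPBB (m+1) :=
    (cnt_congr _ _ (fun l => !BLl (m+1) l && !BLl (m+2) l) (fun l _ => by simp [goodL, OUTL, BLl_cons, CLl_cons, Bool.and_assoc, show m+1+1 = m+2 from rfl, show m+2+1 = m+3 from rfl])).trans rfl
  have htff : cnt (m+3) (fun l => goodL (m+2) [false,false] (true::false::false::l)) = 2^(m+2) :=
    (cnt_congr _ _ (fun l => !l.headI) (fun l _ => by simp [goodL, OUTL, BLl_cons, CLl_cons, Bool.and_assoc, show m+1+1 = m+2 from rfl, show m+2+1 = m+3 from rfl])).trans (cnt_nothead (m+2))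
  have hftt : cnt (m+3) (fun l => goodL (m+2) [false,false] (false::true::true::l)) = fPBB (m+1) :=
    (cnt_congr _ _ (fun l => !BLl (m+1) l && !BLl (m+2) l) (fun l _ => by simp [goodL, OUTL, BLl_cons, CLl_cons, Bool.and_assoc, show m+1+1 = m+2 from rfl, show m+2+1 = m+3 from rfl])).trans rfl
  have hftf : cnt (m+3) (fun l => goodL (m+2) [false,false] (false::true::false::l)) = fPCC (m+1) :=
    (cnt_congr _ _ (fun l => !CLl (m+1) l && !CLl (m+2) l) (fun l _ => by simp [goodL, OUTL, BLl_cons, CLl_cons, Bool.and_assoc, show m+1+1 = m+2 from rfl, show m+2+1 = m+3 from rfl])).trans rfl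
  have hfft : cnt (m+3) (fun l => goodL (m+2) [false,false] (false::false::true::l)) = 0 :=
    (cnt_congr _ _ (fun _ => false) (fun l _ => by simp [goodL, OUTL, BLl_cons, CLl_cons, Bool.and_assoc, show m+1+1 = m+2 from rfl, show m+2+1 = m+3 from rfl])).trans (cnt_false_const (m+3))
  have hfff : cnt (m+3) (fun l => goodL (m+2) [false,false] (false::false::false::l)) = 2^(m+2) :=
    (cnt_congr _ _ (fun l => !l.headI) (fun l _ => by simp [goodL, OUTL, BLl_cons, CLl_cons, Bool.and_assoc, show m+1+1 = m+2 from rfl, show m+2+1 = m+3 from rfl])).trans (cnt_nothead (m+2))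
  show ((cnt (m+3) (fun l => goodL (m+2) [false,false] (true::true::true::l)) + cnt (m+3) (fun l => goodL (m+2) [false,false] (true::true::false::l))) + (cnt (m+3) (fun l => goodL (m+2) [false,false] (true::false::true::l)) + cnt (m+3) (fun l => goodL (m+2) [false,false] (true::false::false::l))))
      + ((cnt (m+3) (fun l => goodL (m+2) [false,false] (false::true::true::l)) + cnt (m+3) (fun l => goodL (m+2) [false,false] (false::true::false::l))) + (cnt (m+3) (fun l => goodL (m+2) [false,false] (false::false::true::l)) + cnt (m+3) (fun l => goodL (m+2) [false,false] (false::false::false::l)))) = _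
  rw [httt, httf, htft, htff, hftt, hftf, hfft, hfff]

lemma decomp3_000 (m : ℕ) : cnt (m+8) (goodL (m+3) [false,false,false]) = (fVB (m+1)) + (fVC (m+1)) + (fVB (m+1)) + (2^(m+3)) + (fVB (m+1)) + (fVC (m+1)) + (0) + (2^(m+3)) + (fVB (m+1)) + (fVC (m+1)) + (fVB (m+1)) + (2^(m+3)) + (0) + (0) + (0) + (2^(m+3)) := by
  have hb1111 : cnt (m+4) (fun l => goodL (m+3) [false,false,false] (true::true::true::true::l)) = fVB (m+1) :=
    (cnt_congr _ _ (fun l => !BLl (m+1) l && !BLl (m+2) l && !BLl (m+3) l) (fun l _ => by simp [goodL, OUTL, BLl_cons, CLl_cons, Bool.and_assoc, show m+1+1 = m+2 from rfl, show m+2+1 = m+3 from rfl])).trans rfl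
  have hb1110 : cnt (m+4) (fun l => goodL (m+3) [false,false,false] (true::true::true::false::l)) = fVC (m+1) :=
    (cnt_congr _ _ (fun l => !CLl (m+1) l && !CLl (m+2) l && !CLl (m+3) l) (fun l _ => by simp [goodL, OUTL, BLl_cons, CLl_cons, Bool.and_assoc, show m+1+1 = m+2 from rfl, show m+2+1 = m+3 from rfl])).trans rfl
  have hb1101 : cnt (m+4) (fun l => goodL (m+3) [false,false,false] (true::true::false::true::l)) = fVB (m+1) :=
    (cnt_congr _ _ (fun l => !BLl (m+1) l && !BLl (m+2) l && !BLl (m+3) l) (fun l _ => by simp [goodL, OUTL, BLl_cons, CLl_cons, Bool.and_assoc, show m+1+1 = m+2 from rfl, show m+2+1 = m+3 from rfl])).trans rfl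
  have hb1100 : cnt (m+4) (fun l => goodL (m+3) [false,false,false] (true::true::false::false::l)) = 2^(m+3) :=
    (cnt_congr _ _ (fun l => !l.headI) (fun l _ => by simp [goodL, OUTL, BLl_cons, CLl_cons, Bool.and_assoc, show m+1+1 = m+2 from rfl, show m+2+1 = m+3 from rfl])).trans (cnt_nothead (m+3))
  have hb1011 : cnt (m+4) (fun l => goodL (m+3) [false,false,false] (true::false::true::true::l)) = fVB (m+1) :=
    (cnt_congr _ _ (fun l => !BLl (m+1) l && !BLl (m+2) l && !BLl (m+3) l) (fun l _ => by simp [goodL, OUTL, BLl_cons, CLl_cons, Bool.and_assoc, show m+1+1 = m+2 from rfl, show m+2+1 = m+3 from rfl])).trans rfl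
  have hb1010 : cnt (m+4) (fun l => goodL (m+3) [false,false,false] (true::false::true::false::l)) = fVC (m+1) :=
    (cnt_congr _ _ (fun l => !CLl (m+1) l && !CLl (m+2) l && !CLl (m+3) l) (fun l _ => by simp [goodL, OUTL, BLl_cons, CLl_cons, Bool.and_assoc, show m+1+1 = m+2 from rfl, show m+2+1 = m+3 from rfl])).trans rfl
  have hb1001 : cnt (m+4) (fun l => goodL (m+3) [false,false,false] (true::false::false::true::l)) = 0 :=
    (cnt_congr _ _ (fun _ => false) (fun l _ => by simp [goodL, OUTL, BLl_cons, CLl_cons, Bool.and_assoc, show m+1+1 = m+2 from rfl, show m+2+1 = m+3 from rfl])).trans (cnt_false_const (m+4))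
  have hb1000 : cnt (m+4) (fun l => goodL (m+3) [false,false,false] (true::false::false::false::l)) = 2^(m+3) :=
    (cnt_congr _ _ (fun l => !l.headI) (fun l _ => by simp [goodL, OUTL, BLl_cons, CLl_cons, Bool.and_assoc, show m+1+1 = m+2 from rfl, show m+2+1 = m+3 from rfl])).trans (cnt_nothead (m+3))
  have hb0111 : cnt (m+4) (fun l => goodL (m+3) [false,false,false] (false::true::true::true::l)) = fVB (m+1) :=
    (cnt_congr _ _ (fun l => !BLl (m+1) l && !BLl (m+2) l && !BLl (m+3) l) (fun l _ => by simp [goodL, OUTL, BLl_cons, CLl_cons, Bool.and_assoc, show m+1+1 = m+2 from rfl, show m+2+1 = m+3 from rfl])).trans rfl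
  have hb0110 : cnt (m+4) (fun l => goodL (m+3) [false,false,false] (false::true::true::false::l)) = fVC (m+1) :=
    (cnt_congr _ _ (fun l => !CLl (m+1) l && !CLl (m+2) l && !CLl (m+3) l) (fun l _ => by simp [goodL, OUTL, BLl_cons, CLl_cons, Bool.and_assoc, show m+1+1 = m+2 from rfl, show m+2+1 = m+3 from rfl])).trans rfl
  have hb0101 : cnt (m+4) (fun l => goodL (m+3) [false,false,false] (false::true::false::true::l)) = fVB (m+1) :=
    (cnt_congr _ _ (fun l => !BLl (m+1) l && !BLl (m+2) l && !BLl (m+3) l) (fun l _ => by simp [goodL, OUTL, BLl_cons, CLl_cons, Bool.and_assoc, show m+1+1 = m+2 from rfl, show m+2+1 = m+3 from rfl])).trans rfl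
  have hb0100 : cnt (m+4) (fun l => goodL (m+3) [false,false,false] (false::true::false::false::l)) = 2^(m+3) :=
    (cnt_congr _ _ (fun l => !l.headI) (fun l _ => by simp [goodL, OUTL, BLl_cons, CLl_cons, Bool.and_assoc, show m+1+1 = m+2 from rfl, show m+2+1 = m+3 from rfl])).trans (cnt_nothead (m+3))
  have hb0011 : cnt (m+4) (fun l => goodL (m+3) [false,false,false] (false::false::true::true::l)) = 0 :=
    (cnt_congr _ _ (fun _ => false) (fun l _ => by simp [goodL, OUTL, BLl_cons, CLl_cons, Bool.and_assoc, show m+1+1 = m+2 from rfl, show m+2+1 = m+3 from rfl])).trans (cnt_false_const (m+4))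
  have hb0010 : cnt (m+4) (fun l => goodL (m+3) [false,false,false] (false::false::true::false::l)) = 0 :=
    (cnt_congr _ _ (fun _ => false) (fun l _ => by simp [goodL, OUTL, BLl_cons, CLl_cons, Bool.and_assoc, show m+1+1 = m+2 from rfl, show m+2+1 = m+3 from rfl])).trans (cnt_false_const (m+4))
  have hb0001 : cnt (m+4) (fun l => goodL (m+3) [false,false,false] (false::false::false::true::l)) = 0 :=
    (cnt_congr _ _ (fun _ => false) (fun l _ => by simp [goodL, OUTL, BLl_cons, CLl_cons, Bool.and_assoc, show m+1+1 = m+2 from rfl, show m+2+1 = m+3 from rfl])).trans (cnt_false_const (m+4))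
  have hb0000 : cnt (m+4) (fun l => goodL (m+3) [false,false,false] (false::false::false::false::l)) = 2^(m+3) :=
    (cnt_congr _ _ (fun l => !l.headI) (fun l _ => by simp [goodL, OUTL, BLl_cons, CLl_cons, Bool.and_assoc, show m+1+1 = m+2 from rfl, show m+2+1 = m+3 from rfl])).trans (cnt_nothead (m+3))
  show ((((cnt (m+4) (fun l => goodL (m+3) [false,false,false] (true::true::true::true::l)) + cnt (m+4) (fun l => goodL (m+3) [false,false,false] (true::true::true::false::l))) + (cnt (m+4) (fun l => goodL (m+3) [false,false,false] (true::true::false::true::l)) + cnt (m+4) (fun l => goodL (m+3) [false,false,false] (true::true::false::false::l)))) + ((cnt (m+4) (fun l => goodL (m+3) [false,false,false] (true::false::true::true::l)) + cnt (m+4) (fun l => goodL (m+3) [false,false,false] (true::false::true::false::l))) + (cnt (m+4) (fun l => goodL (m+3) [false,false,false] (true::false::false::true::l)) + cnt (m+4) (fun l => goodL (m+3) [false,false,false] (true::false::false::false::l))))) + (((cnt (m+4) (fun l => goodL (m+3) [false,false,false] (false::true::true::true::l)) + cnt (m+4) (fun l => goodL (m+3) [false,false,false] (false::true::true::false::l)))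 + (cnt (m+4) (fun l => goodL (m+3) [false,false,false] (false::true::false::true::l)) + cnt (m+4) (fun l => goodL (m+3) [false,false,false] (false::true::false::false::l)))) + ((cnt (m+4) (fun l => goodL (m+3) [false,false,false] (false::false::true::true::l)) + cnt (m+4) (fun l => goodL (m+3) [false,false,false] (false::false::true::false::l))) + (cnt (m+4) (fun l => goodL (m+3) [false,false,false] (false::false::false::true::l)) + cnt (m+4) (fun l => goodL (m+3) [false,false,false] (false::false::false::false::l)))))) = _
  rw [hb1111, hb1110, hb1101, hb1100, hb1011, hb1010, hb1001, hb1000, hb0111, hb0110, hb0101, hb0100, hb0011, hb0010, hb0001, hb0000]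
  omega

lemma decomp3_010 (m : ℕ) : cnt (m+8) (goodL (m+3) [false,true,false]) = (fWB (m+1)) + (fWC (m+1)) + (fWB (m+1)) + (0) + (fWB (m+1)) + (fWC (m+1)) + (fSB2 (m+1)) + (0) + (fWB (m+1)) + (fWC (m+1)) + (fWB (m+1)) + (0) + (0) + (0) + (fSB2 (m+1)) + (0) := by
  have hb1111 : cnt (m+4) (fun l => goodL (m+3) [false,true,false] (true::true::true::true::l)) = fWB (m+1) :=
    (cnt_congr _ _ (fun l => !BLl (m+1) l && BLl (m+2) l && !BLl (m+3) l) (fun l _ => by simp [goodL, OUTL, BLl_cons, CLl_cons, Bool.and_assoc, show m+1+1 = m+2 from rfl, show m+2+1 = m+3 from rfl])).trans rfl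
  have hb1110 : cnt (m+4) (fun l => goodL (m+3) [false,true,false] (true::true::true::false::l)) = fWC (m+1) :=
    (cnt_congr _ _ (fun l => !CLl (m+1) l && CLl (m+2) l && !CLl (m+3) l) (fun l _ => by simp [goodL, OUTL, BLl_cons, CLl_cons, Bool.and_assoc, show m+1+1 = m+2 from rfl, show m+2+1 = m+3 from rfl])).trans rfl
  have hb1101 : cnt (m+4) (fun l => goodL (m+3) [false,true,false] (true::true::false::true::l)) = fWB (m+1) :=
    (cnt_congr _ _ (fun l => !BLl (m+1) l && BLl (m+2) l && !BLl (m+3) l) (fun l _ => by simp [goodL, OUTL, BLl_cons, CLl_cons, Bool.and_assoc, show m+1+1 = m+2 from rfl, show m+2+1 = m+3 from rfl])).trans rfl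
  have hb1100 : cnt (m+4) (fun l => goodL (m+3) [false,true,false] (true::true::false::false::l)) = 0 :=
    (cnt_congr _ _ (fun _ => false) (fun l _ => by simp [goodL, OUTL, BLl_cons, CLl_cons, Bool.and_assoc, show m+1+1 = m+2 from rfl, show m+2+1 = m+3 from rfl])).trans (cnt_false_const (m+4))
  have hb1011 : cnt (m+4) (fun l => goodL (m+3) [false,true,false] (true::false::true::true::l)) = fWB (m+1) :=
    (cnt_congr _ _ (fun l => !BLl (m+1) l && BLl (m+2) l && !BLl (m+3) l) (fun l _ => by simp [goodL, OUTL, BLl_cons, CLl_cons, Bool.and_assoc, show m+1+1 = m+2 from rfl, show m+2+1 = m+3 from rfl])).trans rfl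
  have hb1010 : cnt (m+4) (fun l => goodL (m+3) [false,true,false] (true::false::true::false::l)) = fWC (m+1) :=
    (cnt_congr _ _ (fun l => !CLl (m+1) l && CLl (m+2) l && !CLl (m+3) l) (fun l _ => by simp [goodL, OUTL, BLl_cons, CLl_cons, Bool.and_assoc, show m+1+1 = m+2 from rfl, show m+2+1 = m+3 from rfl])).trans rfl
  have hb1001 : cnt (m+4) (fun l => goodL (m+3) [false,true,false] (true::false::false::true::l)) = fSB2 (m+1) :=
    (cnt_congr _ _ (fun l => !BLl (m+3) l) (fun l _ => by simp [goodL, OUTL, BLl_cons, CLl_cons, Bool.and_assoc, show m+1+1 = m+2 from rfl, show m+2+1 = m+3 from rfl])).trans rfl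
  have hb1000 : cnt (m+4) (fun l => goodL (m+3) [false,true,false] (true::false::false::false::l)) = 0 :=
    (cnt_congr _ _ (fun _ => false) (fun l _ => by simp [goodL, OUTL, BLl_cons, CLl_cons, Bool.and_assoc, show m+1+1 = m+2 from rfl, show m+2+1 = m+3 from rfl])).trans (cnt_false_const (m+4))
  have hb0111 : cnt (m+4) (fun l => goodL (m+3) [false,true,false] (false::true::true::true::l)) = fWB (m+1) :=
    (cnt_congr _ _ (fun l => !BLl (m+1) l && BLl (m+2) l && !BLl (m+3) l) (fun l _ => by simp [goodL, OUTL, BLl_cons, CLl_cons, Bool.and_assoc, show m+1+1 = m+2 from rfl, show m+2+1 = m+3 from rfl])).trans rfl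
  have hb0110 : cnt (m+4) (fun l => goodL (m+3) [false,true,false] (false::true::true::false::l)) = fWC (m+1) :=
    (cnt_congr _ _ (fun l => !CLl (m+1) l && CLl (m+2) l && !CLl (m+3) l) (fun l _ => by simp [goodL, OUTL, BLl_cons, CLl_cons, Bool.and_assoc, show m+1+1 = m+2 from rfl, show m+2+1 = m+3 from rfl])).trans rfl
  have hb0101 : cnt (m+4) (fun l => goodL (m+3) [false,true,false] (false::true::false::true::l)) = fWB (m+1) :=
    (cnt_congr _ _ (fun l => !BLl (m+1) l && BLl (m+2) l && !BLl (m+3) l) (fun l _ => by simp [goodL, OUTL, BLl_cons, CLl_cons, Bool.and_assoc, show m+1+1 = m+2 from rfl, show m+2+1 = m+3 from rfl])).trans rfl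
  have hb0100 : cnt (m+4) (fun l => goodL (m+3) [false,true,false] (false::true::false::false::l)) = 0 :=
    (cnt_congr _ _ (fun _ => false) (fun l _ => by simp [goodL, OUTL, BLl_cons, CLl_cons, Bool.and_assoc, show m+1+1 = m+2 from rfl, show m+2+1 = m+3 from rfl])).trans (cnt_false_const (m+4))
  have hb0011 : cnt (m+4) (fun l => goodL (m+3) [false,true,false] (false::false::true::true::l)) = 0 :=
    (cnt_congr _ _ (fun _ => false) (fun l _ => by simp [goodL, OUTL, BLl_cons, CLl_cons, Bool.and_assoc, show m+1+1 = m+2 from rfl, show m+2+1 = m+3 from rfl])).trans (cnt_false_const (m+4))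
  have hb0010 : cnt (m+4) (fun l => goodL (m+3) [false,true,false] (false::false::true::false::l)) = 0 :=
    (cnt_congr _ _ (fun _ => false) (fun l _ => by simp [goodL, OUTL, BLl_cons, CLl_cons, Bool.and_assoc, show m+1+1 = m+2 from rfl, show m+2+1 = m+3 from rfl])).trans (cnt_false_const (m+4))
  have hb0001 : cnt (m+4) (fun l => goodL (m+3) [false,true,false] (false::false::false::true::l)) = fSB2 (m+1) :=
    (cnt_congr _ _ (fun l => !BLl (m+3) l) (fun l _ => by simp [goodL, OUTL, BLl_cons, CLl_cons, Bool.and_assoc, show m+1+1 = m+2 from rfl, show m+2+1 = m+3 from rfl])).trans rfl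
  have hb0000 : cnt (m+4) (fun l => goodL (m+3) [false,true,false] (false::false::false::false::l)) = 0 :=
    (cnt_congr _ _ (fun _ => false) (fun l _ => by simp [goodL, OUTL, BLl_cons, CLl_cons, Bool.and_assoc, show m+1+1 = m+2 from rfl, show m+2+1 = m+3 from rfl])).trans (cnt_false_const (m+4))
  show ((((cnt (m+4) (fun l => goodL (m+3) [false,true,false] (true::true::true::true::l)) + cnt (m+4) (fun l => goodL (m+3) [false,true,false] (true::true::true::false::l))) + (cnt (m+4) (fun l => goodL (m+3) [false,true,false] (true::true::false::true::l)) + cnt (m+4) (fun l => goodL (m+3) [false,true,false] (true::true::false::false::l)))) + ((cnt (m+4) (fun l => goodL (m+3) [false,true,false] (true::false::true::true::l)) + cnt (m+4) (fun l => goodL (m+3) [false,true,false] (true::false::true::false::l))) + (cnt (m+4) (fun l => goodL (m+3) [false,true,false] (true::false::false::true::l)) + cnt (m+4) (fun l => goodL (m+3) [false,true,false] (true::false::false::false::l))))) + (((cnt (m+4) (fun l => goodL (m+3) [false,true,false] (false::true::true::true::l)) + cnt (m+4) (fun l => goodL (m+3) [false,true,false] (false::true::true::false::l))) + (cnt (m+4)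 (fun l => goodL (m+3) [false,true,false] (false::true::false::true::l)) + cnt (m+4) (fun l => goodL (m+3) [false,true,false] (false::true::false::false::l)))) + ((cnt (m+4) (fun l => goodL (m+3) [false,true,false] (false::false::true::true::l)) + cnt (m+4) (fun l => goodL (m+3) [false,true,false] (false::false::true::false::l))) + (cnt (m+4) (fun l => goodL (m+3) [false,true,false] (false::false::false::true::l)) + cnt (m+4) (fun l => goodL (m+3) [false,true,false] (false::false::false::false::l)))))) = _
  rw [hb1111, hb1110, hb1101, hb1100, hb1011, hb1010, hb1001, hb1000, hb0111, hb0110, hb0101, hb0100, hb0011, hb0010, hb0001, hb0000]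
  omega

/-! ### Final counting identities -/

lemma cntN1 (n : ℕ) (hn : 1 ≤ n) :
    cnt (n+3) (goodL n [false]) + 2 * Nat.fib (n+3) = 7 * 2^n := by
  obtain ⟨m, rfl⟩ : ∃ m, n = m + 1 := ⟨n - 1, by omega⟩
  have hd := decomp1 (m+1)
  obtain ⟨hB, hC, -⟩ := closed_forms m
  have f3 : Nat.fib (m+3) = Nat.fib (m+1) + Nat.fib (m+2) := Nat.fib_add_two
  have f4 : Nat.fib (m+4) = Nat.fib (m+2) + Nat.fib (m+3) := Nat.fib_add_two
  have hp1 : (2:ℕ)^(m+2) = 2^(m+1) + 2^(m+1) := by ring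
  simp only [show m+1+3 = m+4 from rfl, show m+1+2 = m+3 from rfl] at hd ⊢
  omega

lemma cntN2 (n : ℕ) (hn : 1 ≤ n) :
    cnt (n+4) (goodL n [false,false]) + 4 * Nat.fib (n+3) + Nat.fib (n+2) = 3 * 2^(n+2) := by
  match n, hn with
  | 1, _ => decide
  | (m+2), _ =>
    have hd := decomp2 m
    obtain ⟨-, -, hPB, hPC, -⟩ := closed_forms m
    have f3 : Nat.fib (m+3) = Nat.fib (m+1) + Nat.fib (m+2) := Nat.fib_add_two
    have f4 : Nat.fib (m+4) = Nat.fib (m+2) + Nat.fib (m+3) := Nat.fib_add_two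
    have f5 : Nat.fib (m+5) = Nat.fib (m+3) + Nat.fib (m+4) := Nat.fib_add_two
    have hp0 : (2:ℕ)^(m+3) = 2^(m+2) + 2^(m+2) := by ring
    have hp1 : (2:ℕ)^(m+4) = 2^(m+3) + 2^(m+3) := by ring
    simp only [show m+2+4 = m+6 from rfl, show m+2+3 = m+5 from rfl,
      show m+2+2 = m+4 from rfl] at hd ⊢
    omega

lemma cntN3 (n : ℕ) (hn : 1 ≤ n) :
    cnt (n+5) (goodL n [false,false,false]) + 8 * Nat.fib (n+3) + 2 * Nat.fib (n+2)
      = 5 * 2^(n+2) := by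
  match n, hn with
  | 1, _ => decide
  | 2, _ => decide
  | (m+3), _ =>
    have hd := decomp3_000 m
    obtain ⟨-, -, -, -, hVB, hVC, -⟩ := closed_forms m
    have f3 : Nat.fib (m+3) = Nat.fib (m+1) + Nat.fib (m+2) := Nat.fib_add_two
    have f4 : Nat.fib (m+4) = Nat.fib (m+2) + Nat.fib (m+3) := Nat.fib_add_two
    have f5 : Nat.fib (m+5) = Nat.fib (m+3) + Nat.fib (m+4) := Nat.fib_add_two
    have f6 : Nat.fib (m+6) = Nat.fib (m+4) + Nat.fib (m+5) := Nat.fib_add_two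
    have hp0 : (2:ℕ)^(m+4) = 2^(m+3) + 2^(m+3) := by ring
    have hp2 : (2:ℕ)^(m+5) = 2^(m+4) + 2^(m+4) := by ring
    simp only [show m+3+5 = m+8 from rfl, show m+3+3 = m+6 from rfl,
      show m+3+2 = m+5 from rfl] at hd ⊢
    omega

lemma cntN4 (n : ℕ) (hn : 1 ≤ n) :
    cnt (n+5) (goodL n [false,true,false]) + 4 * Nat.fib (n+1) = 2^(n+2) := by
  match n, hn with
  | 1, _ => decide
  | 2, _ => decide
  | (m+3), _ =>
    have hd := decomp3_010 m
    obtain ⟨-, -, -, -, -, -, hWB, hWC, hSB, -⟩ := closed_forms m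
    have f3 : Nat.fib (m+3) = Nat.fib (m+1) + Nat.fib (m+2) := Nat.fib_add_two
    have f4 : Nat.fib (m+4) = Nat.fib (m+2) + Nat.fib (m+3) := Nat.fib_add_two
    have hp0 : (2:ℕ)^(m+4) = 2^(m+3) + 2^(m+3) := by ring
    have hp2 : (2:ℕ)^(m+5) = 2^(m+4) + 2^(m+4) := by ring
    simp only [show m+3+5 = m+8 from rfl, show m+3+1 = m+4 from rfl,
      show m+3+2 = m+5 from rfl] at hd ⊢
    omega


/-- exact block probabilities (short block representation, lengths ≤ 3)
for ECA rule 172 started from the symmetric Bernoulli measure `μ_{1/2}`, in terms of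
Fibonacci numbers (`F_1 = F_2 = 1`). -/
theorem rule172_block_probabilities_half
    (μ : Measure (ℤ → Bool)) (hprob : IsProbabilityMeasure μ)
    (hber : IsBernoulli (1 / 2) μ) (n : ℕ) (hn : 1 ≤ n) :
    (μ ((eca rule172)^[n] ⁻¹' cylinder [false])).toReal
        = 7 / 8 - (Nat.fib (n + 3) : ℝ) / 2 ^ (n + 2) ∧
    (μ ((eca rule172)^[n] ⁻¹' cylinder [false, false])).toReal
        = 3 / 4 - (Nat.fib (n + 3) : ℝ) / 2 ^ (n + 2) - (Nat.fib (n + 2) : ℝ) / 2 ^ (n + 4) ∧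
    (μ ((eca rule172)^[n] ⁻¹' cylinder [false, false, false])).toReal
        = 5 / 8 - (Nat.fib (n + 3) : ℝ) / 2 ^ (n + 2) - (Nat.fib (n + 2) : ℝ) / 2 ^ (n + 4) ∧
    (μ ((eca rule172)^[n] ⁻¹' cylinder [false, true, false])).toReal
        = 1 / 8 - (Nat.fib (n + 1) : ℝ) / 2 ^ (n + 3) := by

  have M1 := measure_preimage_eq μ hber n hn [false]
  have M2 := measure_preimage_eq μ hber n hn [false, false]
  have M3 := measure_preimage_eq μ hber n hn [false, false, false]
  have M4 := measure_preimage_eq μ hber n hn [false, true, false]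
  simp only [List.length_cons, List.length_nil, show n+1+2 = n+3 from rfl,
    show n+2+2 = n+4 from rfl, show n+3+2 = n+5 from rfl, show n+0+1 = n+1 from rfl,
    Nat.zero_add] at M1 M2 M3 M4
  have hfn3 : (0:ℝ) ≤ Nat.fib (n+3) := by positivity
  have key1 : ((cnt (n+3) (goodL n [false]) : ℝ)) = 7 * 2^n - 2 * Nat.fib (n+3) := by
    have h := congrArg (Nat.cast : ℕ → ℝ) (cntN1 n hn)
    push_cast at h; linarith
  have key2 : ((cnt (n+4) (goodL n [false, false]) : ℝ))
      = 3 * 2^(n+2) - 4 * Nat.fib (n+3) - Nat.fib (n+2) := by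
    have h := congrArg (Nat.cast : ℕ → ℝ) (cntN2 n hn)
    push_cast at h; linarith
  have key3 : ((cnt (n+5) (goodL n [false, false, false]) : ℝ))
      = 5 * 2^(n+2) - 8 * Nat.fib (n+3) - 2 * Nat.fib (n+2) := by
    have h := congrArg (Nat.cast : ℕ → ℝ) (cntN3 n hn)
    push_cast at h; linarith
  have key4 : ((cnt (n+5) (goodL n [false, true, false]) : ℝ))
      = 2^(n+2) - 4 * Nat.fib (n+1) := by
    have h := congrArg (Nat.cast : ℕ → ℝ) (cntN4 n hn)
    push_cast at h; linarith
  have e2 : (2:ℝ)^(n+2) = 2^n * 4 := by ring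
  have e3 : (2:ℝ)^(n+3) = 2^n * 8 := by ring
  have e4 : (2:ℝ)^(n+4) = 2^n * 16 := by ring
  have e5 : (2:ℝ)^(n+5) = 2^n * 32 := by ring
  have hne : (2:ℝ)^n ≠ 0 := by positivity
  refine ⟨?_, ?_, ?_, ?_⟩
  · rw [M1, key1, div_pow, one_pow, e3, e2]
    field_simp
    ring
  · rw [M2, key2, div_pow, one_pow, e4, e2]
    field_simp
    ring
  · rw [M3, key3, div_pow, one_pow, e5, e2, e4]
    field_simp
    ring
  · rw [M4, key4, div_pow, one_pow, e5, e2, e3]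
    field_simp
    ring
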